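/- Let (M, ∘, e) be an F-manifold with an eventual identity ε and a special family of connections S̃, and let X * Y := X ∘ Y ∘ ε^{-1}. Choose ∇̃ ∈ S̃ and define D_ε(S̃) := { ∇^W : W a vector field }, where ∇^W_X(Y) = ε∘∇̃_X(ε^{-1}∘Y) − ∇̃_{ε^{-1}∘Y}(ε)∘X + W*X*Y. Then: (a) D_ε(S̃) does not depend on the choice of ∇̃ ∈ S̃; (b) D_ε(S̃) is a special family on the dual F-manifold (M, *, ε); (c) the map (M, ∘, e, ε, S̃) → (M, *, ε, e, D_ε(S̃)) is an involution on the set of F-manifolds with eventual identities and special families of connections, i.e. applying the construction to (M, *, ε) with the eventual identity e (whose *-inverse is ε∘ε) and the family D_ε(S̃) recovers (M, ∘, e, S̃). -/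

import Mathlib

/-- An algebraic model of the geometric setting of the paper: `R` plays the role
of the ring `C^∞(M)` of smooth functions on a manifold `M`, and `V` plays the
role of the `C^∞(M)`-module of smooth vector fields on `M`, equipped with its
Lie bracket and with the action of vector fields on functions by derivations. -/
structure SmoothSetting (R V : Type*) [CommRing R] [LieRing V] [Module R V] where
  /-- the action `X(f)` of a vector field `X` on a function `f` -/
  deriv : V → R → R
  deriv_add : ∀ (X : V) (f g : R), deriv X (f + g) = deriv X f + deriv X g
  deriv_mul : ∀ (X : V) (f g : R), deriv X (f * g) = deriv X f * g + f * deriv X g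
  add_deriv : ∀ (X Y : V) (f : R), deriv (X + Y) f = deriv X f + deriv Y f
  smul_deriv : ∀ (f : R) (X : V) (g : R), deriv (f • X) g = f * deriv X g
  bracket_deriv : ∀ (X Y : V) (f : R),
    deriv ⁅X, Y⁆ f = deriv X (deriv Y f) - deriv Y (deriv X f)
  bracket_smul : ∀ (X : V) (f : R) (Y : V), ⁅X, f • Y⁆ = f • ⁅X, Y⁆ + deriv X f • Y

/-- `(m, e)` is an F-manifold structure: `m` is a fiber-preserving (i.e.
`C^∞(M)`-bilinear) commutative associative multiplication on vector fields with
unit field `e`, satisfying the Hertling–Manin integrability condition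
`L_{X∘Y}(∘) = X ∘ L_Y(∘) + Y ∘ L_X(∘)`. -/
structure IsFManifold (R : Type*) {V : Type*} [CommRing R] [LieRing V] [Module R V]
    (m : V → V → V) (e : V) : Prop where
  add_left : ∀ X Y Z : V, m (X + Y) Z = m X Z + m Y Z
  smul_left : ∀ (f : R) (X Y : V), m (f • X) Y = f • m X Y
  comm : ∀ X Y : V, m X Y = m Y X
  assoc : ∀ X Y Z : V, m (m X Y) Z = m X (m Y Z)
  unit : ∀ X : V, m e X = X
  hertling_manin : ∀ X Y Z W : V,
    ⁅m X Y, m Z W⁆ - m ⁅m X Y, Z⁆ W - m Z ⁅m X Y, W⁆ =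
      m X (⁅Y, m Z W⁆ - m ⁅Y, Z⁆ W - m Z ⁅Y, W⁆)
        + m Y (⁅X, m Z W⁆ - m ⁅X, Z⁆ W - m Z ⁅X, W⁆)

/-- The dual multiplication `X * Y := X ∘ Y ∘ ε⁻¹` determined by an invertible
vector field `ε` with inverse `εinv`. -/
def dualMul {V : Type*} (m : V → V → V) (εinv : V) : V → V → V :=
  fun X Y => m (m X Y) εinv

/-- `ε` (with inverse `εinv`) is an eventual identity on the F-manifold `(m, e)`:
it is invertible and the dual multiplication `X * Y = X ∘ Y ∘ ε⁻¹` defines an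
F-manifold structure on `M` with unit field `ε`. -/
def IsEventualIdentity (R : Type*) {V : Type*} [CommRing R] [LieRing V] [Module R V]
    (m : V → V → V) (e ε εinv : V) : Prop :=
  m ε εinv = e ∧ IsFManifold R (dualMul m εinv) ε

/-- `nabla` is a (Koszul) connection on the tangent bundle, i.e. on vector fields. -/
structure IsConnection {R V : Type*} [CommRing R] [LieRing V] [Module R V]
    (S : SmoothSetting R V) (nabla : V → V → V) : Prop where
  add_left : ∀ X Y Z : V, nabla (X + Y) Z = nabla X Z + nabla Y Z
  smul_left : ∀ (f : R) (X Y : V), nabla (f • X) Y = f • nabla X Y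
  add_right : ∀ X Y Z : V, nabla X (Y + Z) = nabla X Y + nabla X Z
  leibniz : ∀ (X : V) (f : R) (Y : V), nabla X (f • Y) = S.deriv X f • Y + f • nabla X Y

/-- `nabla` is torsion-free. -/
def IsTorsionFree {V : Type*} [LieRing V] (nabla : V → V → V) : Prop :=
  ∀ X Y, nabla X Y - nabla Y X = ⁅X, Y⁆

/-- The covariant derivative `∇_X(∘)(Y, Z)` of a multiplication `m` with respect
to a connection `nabla`. -/
def covMul {V : Type*} [LieRing V] (nabla m : V → V → V) (X Y Z : V) : V :=
  nabla X (m Y Z) - m (nabla X Y) Z - m Y (nabla X Z)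

/-- `nabla` is compatible with the multiplication `m`: the vector valued tensor
`∇(∘)` is totally symmetric. -/
def IsCompatible {V : Type*} [LieRing V] (nabla m : V → V → V) : Prop :=
  ∀ X Y Z, covMul nabla m X Y Z = covMul nabla m Y X Z ∧
    covMul nabla m X Y Z = covMul nabla m X Z Y

/-- The curvature `R^∇_{X,Y}Z = ∇_X∇_Y Z − ∇_Y∇_X Z − ∇_{[X,Y]}Z`. -/
def curv {V : Type*} [LieRing V] (nabla : V → V → V) (X Y Z : V) : V :=
  nabla X (nabla Y Z) - nabla Y (nabla X Z) - nabla ⁅X, Y⁆ Z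

/-- `nabla` is flat. -/
def IsFlat {V : Type*} [LieRing V] (nabla : V → V → V) : Prop :=
  ∀ X Y Z, curv nabla X Y Z = 0

/-- The curvature condition
`V∘R_{Z,Y}X + Y∘R_{V,Z}X + Z∘R_{Y,V}X = 0` of Lorenzoni–Pedroni. -/
def CurvCircCond {V : Type*} [LieRing V] (m nabla : V → V → V) : Prop :=
  ∀ X Y Z W, m W (curv nabla Z Y X) + m Y (curv nabla W Z X)
    + m Z (curv nabla Y W X) = 0

/-- A special family of connections on the F-manifold `(m, e)`: the family of
all `∇̃^V_X(Y) = ∇̃_X(Y) + V∘X∘Y`, `V` a vector field, where `∇̃` is some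
torsion-free connection compatible with `m`. -/
def IsSpecialFamily {R V : Type*} [CommRing R] [LieRing V] [Module R V]
    (S : SmoothSetting R V) (m : V → V → V) (SF : Set (V → V → V)) : Prop :=
  ∃ nt : V → V → V, IsConnection S nt ∧ IsTorsionFree nt ∧ IsCompatible nt m ∧
    SF = { n | ∃ W : V, n = fun X Y => nt X Y + m (m W X) Y }

/-- The connection `∇^W_X(Y) = ε∘∇̃_X(ε⁻¹∘Y) − ∇̃_{ε⁻¹∘Y}(ε)∘X + W*X*Y` on the
dual F-manifold, where `*` is the dual multiplication. -/
def dualConn {V : Type*} [LieRing V] (m : V → V → V) (ε εinv : V)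
    (nt : V → V → V) (W : V) : V → V → V :=
  fun X Y => m ε (nt X (m εinv Y)) - m (nt (m εinv Y) ε) X
    + dualMul m εinv (dualMul m εinv W X) Y

/-- The dual family `D_ε(S̃)` built from a chosen connection `nt ∈ S̃`. -/
def dualFamily {V : Type*} [LieRing V] (m : V → V → V) (ε εinv : V)
    (nt : V → V → V) : Set (V → V → V) :=
  { n | ∃ W : V, n = dualConn m ε εinv nt W }

/-- The dual family `D_ε(S̃)` of a family of connections `S̃`. -/
def dualFamilyOfSet {V : Type*} [LieRing V] (m : V → V → V) (ε εinv : V)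
    (SF : Set (V → V → V)) : Set (V → V → V) :=
  { n | ∃ nt ∈ SF, ∃ W : V, n = dualConn m ε εinv nt W }

/-- The second structure connection
`∇^F_X(Y) = ε∘∇̃_X(ε⁻¹∘Y) − ∇̃_{ε⁻¹∘Y}(ε)∘X` of `(M, ∘, e, ε, ∇̃)`. -/
def secondConn {V : Type*} [LieRing V] (m : V → V → V) (ε εinv : V)
    (nt : V → V → V) : V → V → V :=
  fun X Y => m ε (nt X (m εinv Y)) - m (nt (m εinv Y) ε) X

/-- The connection
`∇_X(Y) = ε∘∇̃_X(ε⁻¹∘Y) − ∇̃_{ε⁻¹∘Y}(ε)∘X + (1/2)[ε⁻¹,ε]∘X∘Y + U*X*Y`. -/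
def uDualConn {V : Type*} [LieRing V] [Module ℚ V] (m : V → V → V)
    (ε εinv U : V) (nt : V → V → V) : V → V → V :=
  fun X Y => secondConn m ε εinv nt X Y + (2 : ℚ)⁻¹ • m (m ⁅εinv, ε⁆ X) Y
    + dualMul m εinv (dualMul m εinv U X) Y

/-- The `k`-th power `X^k` of a vector field with respect to the multiplication
`m` with unit `e`. -/
def mpow {V : Type*} (m : V → V → V) (e X : V) : ℕ → V
  | 0 => e
  | k + 1 => m X (mpow m e X k)

/-- The Legendre transformation `L_u(S̃) = { u⁻¹∘∇̃_X(u∘Y) : ∇̃ ∈ S̃ }` of a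
family of connections `S̃` by an invertible vector field `u` (with inverse
`uinv`). -/
def legFamily {V : Type*} (m : V → V → V) (uinv u : V)
    (SF : Set (V → V → V)) : Set (V → V → V) :=
  { n | ∃ nt ∈ SF, n = fun X Y => m uinv (nt X (m u Y)) }

section Stmt7Aux

variable {R V : Type*} [CommRing R] [LieRing V] [Module R V]
variable {m : V → V → V} {e : V}

namespace Stmt7

theorem madd_r (hF : IsFManifold R m e) (X Y Z : V) :
    m X (Y + Z) = m X Y + m X Z := by
  rw [hF.comm X (Y + Z), hF.add_left, hF.comm Y X, hF.comm Z X]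

theorem mzero_l (hF : IsFManifold R m e) (Y : V) : m 0 Y = 0 := by
  have h := hF.add_left 0 0 Y
  rw [add_zero] at h
  exact right_eq_add.mp h

theorem mzero_r (hF : IsFManifold R m e) (Y : V) : m Y 0 = 0 := by
  rw [hF.comm]; exact mzero_l hF Y

theorem mneg_l (hF : IsFManifold R m e) (X Y : V) : m (-X) Y = -(m X Y) := by
  have h := hF.add_left X (-X) Y
  rw [add_neg_cancel, mzero_l hF] at h
  exact (neg_eq_of_add_eq_zero_right h.symm).symm

theorem msub_l (hF : IsFManifold R m e) (X Y Z : V) :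
    m (X - Y) Z = m X Z - m Y Z := by
  rw [sub_eq_add_neg, hF.add_left, mneg_l hF, sub_eq_add_neg]

theorem mneg_r (hF : IsFManifold R m e) (X Y : V) : m X (-Y) = -(m X Y) := by
  rw [hF.comm, mneg_l hF, hF.comm]

theorem msub_r (hF : IsFManifold R m e) (X Y Z : V) :
    m X (Y - Z) = m X Y - m X Z := by
  rw [hF.comm, msub_l hF, hF.comm Y X, hF.comm Z X]

theorem msmul_r (hF : IsFManifold R m e) (f : R) (X Y : V) :
    m X (f • Y) = f • m X Y := by
  rw [hF.comm, hF.smul_left, hF.comm]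

theorem mlc (hF : IsFManifold R m e) (X Y Z : V) :
    m X (m Y Z) = m Y (m X Z) := by
  rw [← hF.assoc, hF.comm X Y, hF.assoc]

theorem munit_r (hF : IsFManifold R m e) (X : V) : m X e = X := by
  rw [hF.comm, hF.unit]

end Stmt7
end Stmt7Aux
section Stmt7Aux2
variable {R V : Type*} [CommRing R] [LieRing V] [Module R V]
variable {m : V → V → V} {e : V} {nt0 : V → V → V}

namespace Stmt7

/-- rearranged covMul definition -/
theorem covE (nt0 : V → V → V) (A B C : V) :
    nt0 A (m B C) = covMul nt0 m A B C + m (nt0 A B) C + m B (nt0 A C) := by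
  simp only [covMul]; abel

/-- Id1 : Lie derivative of the multiplication in terms of covMul. -/
theorem lieDer (hF : IsFManifold R m e) (hT : IsTorsionFree nt0) (U Z W : V) :
    ⁅U, m Z W⁆ - m ⁅U, Z⁆ W - m Z ⁅U, W⁆ =
      covMul nt0 m U Z W - (nt0 (m Z W) U - m W (nt0 Z U) - m Z (nt0 W U)) := by
  have hT' : ∀ X Y, nt0 X Y - nt0 Y X = ⁅X, Y⁆ := hT
  simp only [← hT', covMul, msub_l hF, msub_r hF, hF.comm, hF.assoc, mlc hF]
  abel

/-- Id2 : expansion of `G_{X∘Y}(Z,W)`. -/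
theorem gExp (hF : IsFManifold R m e) (nt0 : V → V → V) (X Y Z W : V) :
    nt0 (m Z W) (m X Y) - m W (nt0 Z (m X Y)) - m Z (nt0 W (m X Y)) =
      covMul nt0 m (m Z W) X Y - m W (covMul nt0 m Z X Y) - m Z (covMul nt0 m W X Y)
        + m Y (nt0 (m Z W) X - m W (nt0 Z X) - m Z (nt0 W X))
        + m X (nt0 (m Z W) Y - m W (nt0 Z Y) - m Z (nt0 W Y)) := by
  simp only [covMul, msub_r hF, madd_r hF, msub_l hF, hF.comm, hF.assoc, mlc hF]
  abel

/-- the Hertling-Manin condition in terms of covMul (the key symmetry). -/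
theorem starId (hF : IsFManifold R m e) (hT : IsTorsionFree nt0) (X Y Z W : V) :
    covMul nt0 m (m X Y) Z W - m X (covMul nt0 m Y Z W) - m Y (covMul nt0 m X Z W) =
      covMul nt0 m (m Z W) X Y - m Z (covMul nt0 m W X Y) - m W (covMul nt0 m Z X Y) := by
  have h := hF.hertling_manin X Y Z W
  rw [lieDer hF hT (m X Y) Z W, lieDer hF hT Y Z W, lieDer hF hT X Z W,
    gExp hF nt0 X Y Z W] at h
  rw [← sub_eq_zero] at h ⊢
  simp only [msub_r hF, madd_r hF, msub_l hF, hF.add_left, hF.comm, hF.assoc, mlc hF] at h ⊢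
  abel_nf at h ⊢
  exact h

end Stmt7
end Stmt7Aux2
section Stmt7Aux3
variable {R V : Type*} [CommRing R] [LieRing V] [Module R V]
variable {m : V → V → V} {e ε εinv : V} {nt0 : V → V → V}

namespace Stmt7

theorem epsC (hF : IsFManifold R m e) (hev : IsEventualIdentity R m e ε εinv)
    (A : V) : m ε (m εinv A) = A := by
  rw [← hF.assoc, hev.1, hF.unit]

theorem epsC' (hF : IsFManifold R m e) (hev : IsEventualIdentity R m e ε εinv)
    (A : V) : m εinv (m ε A) = A := by
  rw [← hF.assoc, hF.comm εinv ε, hev.1, hF.unit]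

theorem dm1 (hF : IsFManifold R m e) (hev : IsEventualIdentity R m e ε εinv)
    (a b : V) : m (m a (m b ε)) εinv = m a b := by
  rw [hF.assoc, hF.assoc, hev.1, munit_r hF]

theorem dm3 (hF : IsFManifold R m e) (a Q : V) :
    m (m a Q) εinv = m a (m εinv Q) := by
  rw [hF.assoc, hF.comm Q εinv]

theorem lstar0 (hF : IsFManifold R m e) (hev : IsEventualIdentity R m e ε εinv)
    (Z W : V) :
    ⁅ε, dualMul m εinv Z W⁆ - dualMul m εinv ⁅ε, Z⁆ W - dualMul m εinv Z ⁅ε, W⁆ = 0 := by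
  have h := hev.2.hertling_manin ε ε Z W
  simp only [hev.2.unit] at h
  exact left_eq_add.mp h

theorem hLeps (hF : IsFManifold R m e) (hev : IsEventualIdentity R m e ε εinv)
    (a b : V) : ⁅ε, m a b⁆ - m ⁅ε, a⁆ b - m a ⁅ε, b⁆ = m (m a b) ⁅e, ε⁆ := by
  have st1 := lstar0 hF hev a (m b ε)
  have st2 := lstar0 hF hev e (m b ε)
  simp only [dualMul] at st1 st2
  rw [dm1 hF hev a b, dm1 hF hev ⁅ε, a⁆ b, dm3 hF a ⁅ε, m b ε⁆] at st1
  rw [dm1 hF hev e b, hF.unit b, dm1 hF hev ⁅ε, e⁆ b, hF.unit ⁅ε, m b ε⁆,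
    hF.comm ⁅ε, m b ε⁆ εinv] at st2
  have hq : m εinv ⁅ε, m b ε⁆ = ⁅ε, b⁆ - m ⁅ε, e⁆ b := by
    rw [eq_sub_iff_add_eq, add_comm]
    rw [sub_sub, sub_eq_zero] at st2
    exact st2.symm
  rw [hq, msub_r hF] at st1
  have hsk : m a (m ⁅ε, e⁆ b) = - m (m a b) ⁅e, ε⁆ := by
    rw [← lie_skew e ε, mneg_r hF, neg_neg]
    simp only [hF.comm, hF.assoc, mlc hF]
  rw [hsk] at st1
  rw [← sub_eq_zero]
  abel_nf at st1 ⊢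
  exact st1

theorem conId (hF : IsFManifold R m e) (hev : IsEventualIdentity R m e ε εinv)
    (hT : IsTorsionFree nt0) (a b : V) :
    covMul nt0 m ε a b =
      nt0 (m a b) ε - m b (nt0 a ε) - m a (nt0 b ε) + m (m a b) ⁅e, ε⁆ := by
  have h2 := hLeps hF hev a b
  rw [lieDer (nt0 := nt0) hF hT ε a b] at h2
  rw [← sub_eq_zero] at h2 ⊢
  abel_nf at h2 ⊢
  exact h2

theorem nablaE (hF : IsFManifold R m e) (hK : IsCompatible nt0 m) (U : V) :
    nt0 U e = m (nt0 e e) U := by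
  have h3 : covMul nt0 m U e e = covMul nt0 m e e U :=
    ((hK U e e).1).trans (hK e U e).2
  simp only [covMul, hF.unit, munit_r hF] at h3
  have h4 : -(nt0 U e) = -(m (nt0 e e) U) := by
    rw [← sub_eq_zero] at h3 ⊢
    abel_nf at h3 ⊢
    exact h3
  exact neg_inj.mp h4

end Stmt7
end Stmt7Aux3
section Stmt7Aux4
variable {R V : Type*} [CommRing R] [LieRing V] [Module R V]
variable {m : V → V → V} {e ε εinv : V} {nt0 : V → V → V}

namespace Stmt7

theorem me1 (hF : IsFManifold R m e) (hev : IsEventualIdentity R m e ε εinv)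
    (v : V) : m (m ε v) εinv = v := by
  rw [hF.comm ε v, hF.assoc, hev.1, munit_r hF]

theorem dl (hF : IsFManifold R m e) (hev : IsEventualIdentity R m e ε εinv)
    (A u : V) :
    secondConn m ε εinv nt0 A (m ε u) = m ε (nt0 A u) - m (nt0 u ε) A := by
  simp only [secondConn, epsC' hF hev]

theorem starmul (hF : IsFManifold R m e) (hev : IsEventualIdentity R m e ε εinv)
    (u v : V) : dualMul m εinv (m ε u) (m ε v) = m ε (m u v) := by
  show m (m (m ε u) (m ε v)) εinv = m ε (m u v)
  rw [hF.assoc (m ε u) (m ε v) εinv, me1 hF hev v, hF.assoc]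

theorem secondTF' (hF : IsFManifold R m e) (hev : IsEventualIdentity R m e ε εinv)
    (hT : IsTorsionFree nt0) (hK : IsCompatible nt0 m) (x y : V) :
    secondConn m ε εinv nt0 (m ε x) (m ε y)
      - secondConn m ε εinv nt0 (m ε y) (m ε x) = ⁅m ε x, m ε y⁆ := by
  have hT' : ∀ X Y, nt0 X Y - nt0 Y X = ⁅X, Y⁆ := hT
  rw [dl hF hev, dl hF hev, ← hT']
  rw [covE nt0 (m ε x) ε y, covE nt0 (m ε y) ε x]
  rw [(hK (m ε x) ε y).1, (hK (m ε y) ε x).1]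
  rw [conId hF hev hT (m ε x) y, conId hF hev hT (m ε y) x]
  rw [← sub_eq_zero]
  simp only [msub_r hF, madd_r hF, msub_l hF, hF.add_left, hF.comm, hF.assoc, mlc hF]
  abel

theorem secondTF (hF : IsFManifold R m e) (hev : IsEventualIdentity R m e ε εinv)
    (hT : IsTorsionFree nt0) (hK : IsCompatible nt0 m) :
    IsTorsionFree (secondConn m ε εinv nt0) := by
  intro X Y
  rw [show X = m ε (m εinv X) from (epsC hF hev X).symm,
    show Y = m ε (m εinv Y) from (epsC hF hev Y).symm]
  exact secondTF' hF hev hT hK (m εinv X) (m εinv Y)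

theorem masterCompat (hF : IsFManifold R m e) (hev : IsEventualIdentity R m e ε εinv)
    (hT : IsTorsionFree nt0) (hK : IsCompatible nt0 m) (x y z : V) :
    covMul (secondConn m ε εinv nt0) (dualMul m εinv) (m ε x) (m ε y) (m ε z) =
      m ε (m ε (covMul nt0 m x y z)
        + (nt0 (m x (m y z)) ε - m x (nt0 (m y z) ε) - m y (nt0 (m x z) ε)
            - m z (nt0 (m x y) ε)
          + m (m x y) (nt0 z ε) + m (m x z) (nt0 y ε) + m (m y z) (nt0 x ε))) := by
  show secondConn m ε εinv nt0 (m ε x) (dualMul m εinv (m ε y) (m ε z))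
      - dualMul m εinv (secondConn m ε εinv nt0 (m ε x) (m ε y)) (m ε z)
      - dualMul m εinv (m ε y) (secondConn m ε εinv nt0 (m ε x) (m ε z)) = _
  rw [starmul hF hev y z]
  rw [dl hF hev (m ε x) (m y z), dl hF hev (m ε x) y, dl hF hev (m ε x) z]
  rw [mlc hF (nt0 y ε) ε x, mlc hF (nt0 z ε) ε x, mlc hF (nt0 (m y z) ε) ε x]
  simp only [← msub_r hF]
  rw [starmul hF hev, starmul hF hev]
  simp only [← msub_r hF]
  refine congrArg (m ε) ?_
  rw [covE nt0 (m ε x) y z]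
  have hstar := starId (nt0 := nt0) hF hT ε x y z
  rw [(hK (m y z) ε x).1, (hK z ε x).1, (hK y ε x).1] at hstar
  rw [conId hF hev hT (m y z) x, conId hF hev hT z x, conId hF hev hT y x,
    conId hF hev hT y z] at hstar
  rw [← sub_eq_zero] at hstar ⊢
  simp only [msub_r hF, madd_r hF, msub_l hF, hF.add_left, hF.comm, hF.assoc,
    mlc hF] at hstar ⊢
  abel_nf at hstar ⊢
  exact hstar

end Stmt7
end Stmt7Aux4
section Stmt7Aux5
variable {R V : Type*} [CommRing R] [LieRing V] [Module R V]
variable {m : V → V → V} {e ε εinv : V} {nt0 : V → V → V}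

namespace Stmt7

theorem secondCompat (hF : IsFManifold R m e) (hev : IsEventualIdentity R m e ε εinv)
    (hT : IsTorsionFree nt0) (hK : IsCompatible nt0 m) :
    IsCompatible (secondConn m ε εinv nt0) (dualMul m εinv) := by
  intro X Y Z
  rw [show X = m ε (m εinv X) from (epsC hF hev X).symm,
    show Y = m ε (m εinv Y) from (epsC hF hev Y).symm,
    show Z = m ε (m εinv Z) from (epsC hF hev Z).symm]
  constructor
  · rw [masterCompat hF hev hT hK, masterCompat hF hev hT hK]
    refine congrArg (m ε) ?_
    rw [(hK (m εinv X) (m εinv Y) (m εinv Z)).1]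
    rw [← sub_eq_zero]
    simp only [hF.comm, hF.assoc, mlc hF]
    abel
  · rw [masterCompat hF hev hT hK, masterCompat hF hev hT hK]
    refine congrArg (m ε) ?_
    rw [(hK (m εinv X) (m εinv Y) (m εinv Z)).2]
    rw [← sub_eq_zero]
    simp only [hF.comm, hF.assoc, mlc hF]
    abel

theorem secondConnIsConn {S : SmoothSetting R V} (hF : IsFManifold R m e)
    (hev : IsEventualIdentity R m e ε εinv) (hC : IsConnection S nt0) :
    IsConnection S (secondConn m ε εinv nt0) := by
  constructor
  · intro X Y Z
    simp only [secondConn]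
    rw [hC.add_left, madd_r hF, madd_r hF]
    abel
  · intro f X Y
    simp only [secondConn]
    rw [hC.smul_left, msmul_r hF, msmul_r hF, smul_sub]
  · intro X Y Z
    simp only [secondConn]
    rw [madd_r hF, hC.add_right, madd_r hF, hC.add_left, hF.add_left]
    abel
  · intro X f Y
    simp only [secondConn]
    rw [msmul_r hF, hC.leibniz, madd_r hF, msmul_r hF, msmul_r hF, epsC hF hev,
      hC.smul_left, hF.smul_left, smul_sub]
    abel

theorem scshift (hF : IsFManifold R m e) (Wd : V) :
    secondConn m ε εinv (fun A B => nt0 A B + m (m Wd A) B) =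
      secondConn m ε εinv nt0 := by
  funext X Y
  simp only [secondConn, madd_r hF, hF.add_left, hF.comm, hF.assoc, mlc hF]
  abel

theorem dcshift (hF : IsFManifold R m e) (Wd : V) :
    dualConn m ε εinv (fun A B => nt0 A B + m (m Wd A) B) =
      dualConn m ε εinv nt0 := by
  funext Wv X Y
  simp only [dualConn, dualMul, madd_r hF, hF.add_left, hF.comm, hF.assoc, mlc hF]
  abel

theorem psiEq (hF : IsFManifold R m e) (hev : IsEventualIdentity R m e ε εinv)
    (hT : IsTorsionFree nt0) (hK : IsCompatible nt0 m) (Y : V) :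
    m εinv (nt0 Y ε) + nt0 (m ε Y) εinv - m Y (nt0 εinv ε) =
      m Y (nt0 e e - m εinv ⁅e, ε⁆) := by
  have hcan : ∀ A B : V, m ε A = m ε B → A = B := by
    intro A B h
    have h2 := congrArg (m εinv) h
    rwa [epsC' hF hev, epsC' hF hev] at h2
  apply hcan
  have hh := covE (m := m) nt0 (m ε Y) ε εinv
  rw [hev.1, nablaE hF hK (m ε Y)] at hh
  rw [(hK (m ε Y) ε εinv).1, conId hF hev hT (m ε Y) εinv] at hh
  rw [me1 hF hev Y] at hh
  rw [← sub_eq_zero] at hh ⊢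
  simp only [msub_r hF, madd_r hF, msub_l hF, hF.add_left, hF.comm, hF.assoc,
    mlc hF, epsC hF hev, epsC' hF hev] at hh ⊢
  abel_nf at hh ⊢
  rw [← neg_eq_zero] at hh
  abel_nf at hh
  exact hh

end Stmt7
end Stmt7Aux5
section Stmt7Aux6
variable {R V : Type*} [CommRing R] [LieRing V] [Module R V]
variable {m : V → V → V} {e ε εinv : V} {nt0 : V → V → V}

namespace Stmt7

theorem dualdual (hF : IsFManifold R m e) (hev : IsEventualIdentity R m e ε εinv) :
    dualMul (dualMul m εinv) (m ε ε) = m := by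
  funext X Y
  show m (m (m (m X Y) εinv) (m ε ε)) εinv = m X Y
  rw [hF.assoc (m X Y) εinv (m ε ε), epsC' hF hev ε, hF.comm (m X Y) ε,
    me1 hF hev]

theorem b1 (hF : IsFManifold R m e) (hev : IsEventualIdentity R m e ε εinv)
    (Y : V) : dualMul m εinv (m ε ε) Y = m ε Y := by
  show m (m (m ε ε) Y) εinv = m ε Y
  rw [hF.assoc ε ε Y, me1 hF hev]

theorem b5 (hF : IsFManifold R m e) (hev : IsEventualIdentity R m e ε εinv)
    (A B : V) : m (m (m ε A) B) εinv = m A B := by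
  rw [hF.assoc ε A B, me1 hF hev]

theorem finalDual (hF : IsFManifold R m e) (hev : IsEventualIdentity R m e ε εinv)
    (hT : IsTorsionFree nt0) (hK : IsCompatible nt0 m) (Wn U : V) :
    dualConn (dualMul m εinv) e (m ε ε) (dualConn m ε εinv nt0 Wn) U =
      fun X Y => nt0 X Y + m (m (U - (nt0 e e - m εinv ⁅e, ε⁆)) X) Y := by
  funext X Y
  show dualMul m εinv e (dualConn m ε εinv nt0 Wn X (dualMul m εinv (m ε ε) Y))
      - dualMul m εinv (dualConn m ε εinv nt0 Wn (dualMul m εinv (m ε ε) Y) e) X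
      + dualMul (dualMul m εinv) (m ε ε) (dualMul (dualMul m εinv) (m ε ε) U X) Y
      = nt0 X Y + m (m (U - (nt0 e e - m εinv ⁅e, ε⁆)) X) Y
  rw [dualdual hF hev, b1 hF hev Y]
  have hin1 : dualConn m ε εinv nt0 Wn X (m ε Y)
      = m ε (nt0 X Y) - m (nt0 Y ε) X + m εinv (m Wn (m X Y)) := by
    simp only [dualConn, dualMul]
    rw [hF.assoc (m Wn X) εinv (m ε Y)]
    simp only [epsC' hF hev]
    rw [hF.comm (m (m Wn X) Y) εinv, hF.assoc Wn X Y]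
  have hin2 : dualConn m ε εinv nt0 Wn (m ε Y) e
      = m ε (nt0 (m ε Y) εinv) - m (nt0 εinv ε) (m ε Y) + m (m Wn Y) εinv := by
    simp only [dualConn, dualMul, munit_r hF]
    rw [mlc hF Wn ε Y, me1 hF hev (m Wn Y)]
  rw [hin1, hin2]
  simp only [dualMul, hF.unit]
  rw [mlc hF (nt0 εinv ε) ε Y]
  have hP := congrArg (fun t => m X t) (psiEq hF hev hT hK Y)
  rw [← sub_eq_zero] at hP ⊢
  simp only [msub_l hF, msub_r hF, madd_r hF, hF.add_left,
    me1 hF hev, b5 hF hev, hF.comm, hF.assoc, mlc hF] at hP ⊢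
  abel_nf at hP ⊢
  first
    | exact hP
    | (rw [← neg_eq_zero] at hP; abel_nf at hP; exact hP)

end Stmt7
end Stmt7Aux6

/-- **Theorem 5.3.** Let `(M, ∘, e)` be an F-manifold with
eventual identity `ε` and special family `S̃`, and choose `∇̃ ∈ S̃`. Then:
(a) the dual family `D_ε(S̃) = {∇^W : W}` does not depend on the choice of
`∇̃ ∈ S̃`; (b) `D_ε(S̃)` is a special family on the dual F-manifold `(M, *, ε)`;
(c) the map is an involution: twisting `*` by `e` (with `*`-inverse `ε∘ε`)
recovers `∘`, and applying the dual-family construction on `(M, *, ε)` to any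
member of `D_ε(S̃)` recovers `S̃`. -/
theorem statement7 {R V : Type*} [CommRing R] [LieRing V] [Module R V]
    (S : SmoothSetting R V) (m : V → V → V) (e ε εinv : V)
    (hF : IsFManifold R m e) (hev : IsEventualIdentity R m e ε εinv)
    (SF : Set (V → V → V)) (hSF : IsSpecialFamily S m SF)
    (nt : V → V → V) (hnt : nt ∈ SF) :
    (∀ nt' ∈ SF, dualFamily m ε εinv nt' = dualFamily m ε εinv nt) ∧
      IsSpecialFamily S (dualMul m εinv) (dualFamily m ε εinv nt) ∧
      dualMul (dualMul m εinv) (m ε ε) = m ∧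
      ∀ n ∈ dualFamily m ε εinv nt,
        dualFamily (dualMul m εinv) e (m ε ε) n = SF := by
  obtain ⟨nt0, hC0, hT0, hK0, hSFeq⟩ := hSF
  subst hSFeq
  obtain ⟨W0, hW0⟩ := hnt
  refine ⟨?_, ?_, Stmt7.dualdual hF hev, ?_⟩
  · intro nt' hnt'
    obtain ⟨W', hW'⟩ := hnt'
    simp only [dualFamily]
    rw [hW', hW0, Stmt7.dcshift hF W', Stmt7.dcshift hF W0]
  · refine ⟨secondConn m ε εinv nt, ?_, ?_, ?_, ?_⟩
    · rw [hW0, Stmt7.scshift hF W0]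
      exact Stmt7.secondConnIsConn hF hev hC0
    · rw [hW0, Stmt7.scshift hF W0]
      exact Stmt7.secondTF hF hev hT0 hK0
    · rw [hW0, Stmt7.scshift hF W0]
      exact Stmt7.secondCompat hF hev hT0 hK0
    · rfl
  · intro n hn
    obtain ⟨Wn, hWn⟩ := hn
    rw [hWn, hW0, Stmt7.dcshift hF W0]
    ext n'
    simp only [dualFamily, Set.mem_setOf_eq]
    constructor
    · rintro ⟨U, hU⟩
      exact ⟨U - (nt0 e e - m εinv ⁅e, ε⁆),
        by rw [hU, Stmt7.finalDual hF hev hT0 hK0 Wn U]⟩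
    · rintro ⟨W', hW'⟩
      refine ⟨W' + (nt0 e e - m εinv ⁅e, ε⁆), ?_⟩
      rw [hW', Stmt7.finalDual hF hev hT0 hK0 Wn _, add_sub_cancel_right]
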